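/- Let (P,ρ,ζ̄) be a quasi-graded poset such that for every interval [x,z] the ab-index Ψ([x,z],ρ,ζ̄) lies in the subalgebra of ℚ⟨a,b⟩ generated by c = a+b and d = ab+ba. Then (P,ρ,ζ̄) is Eulerian. -/
import Mathlib


open scoped Classical
open Finset

noncomputable section

/-- The free noncommutative algebra `ℚ⟨a,b⟩`. -/
abbrev QA : Type := FreeAlgebra ℚ Bool

/-- The variable `a`. -/
def av : QA := FreeAlgebra.ι ℚ true

/-- The variable `b`. -/
def bv : QA := FreeAlgebra.ι ℚ false

/-- `c = a + b`. -/
def cvar : QA := av + bv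

/-- `d = ab + ba`. -/
def dvar : QA := av * bv + bv * av

variable {α : Type*}

/-- The `ζ̄`-weight of a chain encoded as `f : Fin (k+1) → α`:
the product of the values of `ζ̄` on consecutive elements. -/
def chainZeta (ζ : α → α → ℚ) {k : ℕ} (f : Fin (k + 1) → α) : ℚ :=
  (List.ofFn (fun i : Fin k => ζ (f i.castSucc) (f i.succ))).prod

/-- The `ab`-weight of a chain: `(a-b)^{g₁-1} · b · (a-b)^{g₂-1} · b ⋯ b · (a-b)^{g_k-1}`
where `gᵢ` are the successive rank gaps along the chain. -/
def chainWt (ρ : α → ℕ) {k : ℕ} (f : Fin (k + 1) → α) : QA :=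
  (List.ofFn (fun i : Fin k =>
    (if (i : ℕ) = 0 then 1 else bv) *
      (av - bv) ^ (ρ (f i.succ) - ρ (f i.castSucc) - 1))).prod

/-- `f` encodes a (strict) chain from `x` to `z`. -/
def IsChainFrom [PartialOrder α] {k : ℕ} (f : Fin (k + 1) → α) (x z : α) : Prop :=
  StrictMono f ∧ f 0 = x ∧ f (Fin.last k) = z

/-- The ab-index `Ψ` of the interval `[x,z]` of a quasi-graded poset:
the sum over all chains from `x` to `z` of `ζ̄(c) · wt(c)`. -/
def abIndex [PartialOrder α] [Fintype α] (ρ : α → ℕ) (ζ : α → α → ℚ) (x z : α) : QA :=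
  ∑ k ∈ Finset.range (Fintype.card α), ∑ f : Fin (k + 1) → α,
    if IsChainFrom f x z then chainZeta ζ f • chainWt ρ f else 0

/-- `(P,ρ,ζ̄)` is a quasi-graded poset: `ρ` is strictly order-preserving and `ζ̄`
is an element of the incidence algebra with `ζ̄(x,x) = 1`. -/
def IsQuasiGraded [PartialOrder α] (ρ : α → ℕ) (ζ : α → α → ℚ) : Prop :=
  StrictMono ρ ∧ (∀ x, ζ x x = 1) ∧ ∀ x y : α, ¬ x ≤ y → ζ x y = 0

/-- Convolution in the incidence algebra. -/
def iaMul [PartialOrder α] [Fintype α] (f g : α → α → ℚ) : α → α → ℚ :=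
  fun x z => ∑ y ∈ Finset.univ.filter (fun y => x ≤ y ∧ y ≤ z), f x y * g y z

/-- The identity `δ` of the incidence algebra. -/
def iaDelta : α → α → ℚ := fun x z => if x = z then 1 else 0

/-- The Eulerian condition on the interval `[x,z]`:
`∑_{x ≤ y ≤ z} (-1)^{ρ(y)-ρ(x)} ζ̄(x,y) ζ̄(y,z) = δ_{x,z}`. -/
def EulerianAt [PartialOrder α] [Fintype α] (ρ : α → ℕ) (ζ : α → α → ℚ) (x z : α) : Prop :=
  (∑ y ∈ Finset.univ.filter (fun y => x ≤ y ∧ y ≤ z),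
    (-1 : ℚ) ^ (ρ y - ρ x) * ζ x y * ζ y z) = iaDelta x z

/-- `(P,ρ,ζ̄)` is Eulerian. -/
def IsEulerian [PartialOrder α] [Fintype α] (ρ : α → ℕ) (ζ : α → α → ℚ) : Prop :=
  ∀ x z : α, x ≤ z → EulerianAt ρ ζ x z

/-- The flag `f̄`-vector: `f̄_S = ∑_c ζ̄(c)` over chains from `x` to `z`
whose interior elements have ranks exactly `S`. -/
def flagF [PartialOrder α] [Fintype α] (ρ : α → ℕ) (ζ : α → α → ℚ)
    (x z : α) (S : Finset ℕ) : ℚ :=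
  ∑ k ∈ Finset.range (Fintype.card α), ∑ f : Fin (k + 1) → α,
    if IsChainFrom f x z ∧
        (Finset.univ.filter (fun i : Fin (k + 1) => i ≠ 0 ∧ i ≠ Fin.last k)).image
          (fun i => ρ (f i)) = S
      then chainZeta ζ f else 0

/-- The flag `h̄`-vector: `h̄_S = ∑_{T ⊆ S} (-1)^{|S-T|} f̄_T`. -/
def flagH [PartialOrder α] [Fintype α] (ρ : α → ℕ) (ζ : α → α → ℚ)
    (x z : α) (S : Finset ℕ) : ℚ :=
  ∑ T ∈ S.powerset, (-1 : ℚ) ^ (S.card - T.card) * flagF ρ ζ x z T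

/-- Chains with respect to an explicit strict relation `lt`. -/
def IsChainFromRel (lt : α → α → Prop) {k : ℕ} (f : Fin (k + 1) → α) (x z : α) : Prop :=
  (∀ i j : Fin (k + 1), i < j → lt (f i) (f j)) ∧ f 0 = x ∧ f (Fin.last k) = z

/-- The ab-index with respect to an explicit strict order relation `lt`. -/
def abIndexRel [Fintype α] (lt : α → α → Prop) (ρ : α → ℕ) (ζ : α → α → ℚ)
    (x z : α) : QA :=
  ∑ k ∈ Finset.range (Fintype.card α), ∑ f : Fin (k + 1) → α,
    if IsChainFromRel lt f x z then chainZeta ζ f • chainWt ρ f else 0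

/-- The Eulerian condition with respect to an explicit order relation `le`. -/
def IsEulerianRel [Fintype α] (le : α → α → Prop) (ρ : α → ℕ) (ζ : α → α → ℚ) : Prop :=
  ∀ x z : α, le x z →
    (∑ y ∈ Finset.univ.filter (fun y => le x y ∧ le y z),
      (-1 : ℚ) ^ (ρ y - ρ x) * ζ x y * ζ y z) = (if x = z then (1 : ℚ) else 0)

/-- Carrier of the zipped poset: remove `x` and `y`; the element `z` plays
the role of the new element `w`. -/
abbrev ZipCarrier (α : Type*) (x y : α) : Type _ := {u : α // u ≠ x ∧ u ≠ y}

/-- The strict order of the zipped poset: `u <_Q w` iff `u < x` or `u < y`,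
`w <_Q v` iff `x < v`, and otherwise the order is inherited from `P`. -/
def zipLt [PartialOrder α] (x y z : α) : ZipCarrier α x y → ZipCarrier α x y → Prop :=
  fun u v =>
    if u.1 = z then v.1 ≠ z ∧ x < v.1
    else if v.1 = z then u.1 < x ∨ u.1 < y
    else u.1 < v.1

/-- The (non-strict) order of the zipped poset. -/
def zipLe [PartialOrder α] (x y z : α) : ZipCarrier α x y → ZipCarrier α x y → Prop :=
  fun u v => zipLt x y z u v ∨ u = v

/-- The rank function of the zipped poset: `ρ_Q(w) = ρ(x)`, otherwise inherited. -/
def zipRank [PartialOrder α] (ρ : α → ℕ) (x y z : α) : ZipCarrier α x y → ℕ :=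
  fun u => if u.1 = z then ρ x else ρ u.1

/-- The weighted zeta function of the zipped poset:
`ζ̄_Q(w,v) = ζ̄(x,v)`, `ζ̄_Q(u,w) = ζ̄(u,x) + ζ̄(u,y) - ζ̄(u,z)`, otherwise inherited. -/
def zipZeta [PartialOrder α] (ζ : α → α → ℚ) (x y z : α) :
    ZipCarrier α x y → ZipCarrier α x y → ℚ :=
  fun u v =>
    if v.1 = z then (if u.1 = z then 1 else ζ u.1 x + ζ u.1 y - ζ u.1 z)
    else if u.1 = z then ζ x v.1
    else ζ u.1 v.1

section CDProof

open Finset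

/-- Evaluation `a ↦ 0, b ↦ -1`. -/
noncomputable def phA : QA →ₐ[ℚ] ℚ := FreeAlgebra.lift ℚ (fun t : Bool => if t then 0 else -1)

/-- Evaluation `a ↦ -1, b ↦ 0`. -/
noncomputable def phB : QA →ₐ[ℚ] ℚ := FreeAlgebra.lift ℚ (fun t : Bool => if t then -1 else 0)

@[simp] lemma phA_av : phA av = 0 := by simp [phA, av]
@[simp] lemma phA_bv : phA bv = -1 := by simp [phA, bv]
@[simp] lemma phB_av : phB av = -1 := by simp [phB, av]
@[simp] lemma phB_bv : phB bv = 0 := by simp [phB, bv]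

lemma phi_agree {u : QA} (hu : u ∈ Algebra.adjoin ℚ ({cvar, dvar} : Set QA)) :
    phA u = phB u := by
  induction hu using Algebra.adjoin_induction with
  | mem v hv =>
    simp only [Set.mem_insert_iff, Set.mem_singleton_iff] at hv
    rcases hv with rfl | rfl <;> simp [cvar, dvar]
  | algebraMap r => simp
  | add u v _ _ hu hv => simp [hu, hv]
  | mul u v _ _ hu hv => simp [hu, hv]

variable {α : Type*}

lemma chainZeta_eq (ζ : α → α → ℚ) {k : ℕ} (f : Fin (k + 1) → α) :
    chainZeta ζ f = ∏ i : Fin k, ζ (f i.castSucc) (f i.succ) :=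
  List.prod_ofFn

lemma ph_chainWt (φ : QA →ₐ[ℚ] ℚ) (ρ : α → ℕ) {k : ℕ} (f : Fin (k + 1) → α) :
    φ (chainWt ρ f) = ∏ i : Fin k,
      φ ((if (i : ℕ) = 0 then 1 else bv) *
        (av - bv) ^ (ρ (f i.succ) - ρ (f i.castSucc) - 1)) := by
  rw [chainWt, map_list_prod, List.map_ofFn, List.prod_ofFn]
  rfl

lemma prod_sign (k : ℕ) :
    (∏ i : Fin k, (if (i : ℕ) = 0 then (1 : ℚ) else -1)) = (-1) ^ (k - 1) := by
  cases k with
  | zero => simp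
  | succ m =>
    rw [Fin.prod_univ_succ]
    simp [Fin.val_succ]

lemma phA_chainWt (ρ : α → ℕ) {k : ℕ} (f : Fin (k + 1) → α) :
    phA (chainWt ρ f) = (-1 : ℚ) ^ (k - 1) := by
  rw [ph_chainWt, ← prod_sign k]
  refine Finset.prod_congr rfl fun i _ => ?_
  by_cases h : (i : ℕ) = 0 <;> simp [h]

lemma phB_chainWt_one (ρ : α → ℕ) (f : Fin 2 → α) :
    phB (chainWt ρ f) = (-1 : ℚ) ^ (ρ (f 1) - ρ (f 0) - 1) := by
  rw [ph_chainWt, Fin.prod_univ_one]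
  norm_num

lemma phB_chainWt_big (ρ : α → ℕ) {k : ℕ} (hk : 2 ≤ k) (f : Fin (k + 1) → α) :
    phB (chainWt ρ f) = 0 := by
  rw [ph_chainWt]
  refine Finset.prod_eq_zero (Finset.mem_univ (⟨1, by omega⟩ : Fin k)) ?_
  simp

/-- The number (weighted by `ζ`) of chains of length `k` from `x` to `z`. -/
noncomputable def chainF [PartialOrder α] [Fintype α] (ζ : α → α → ℚ) (k : ℕ) (x z : α) : ℚ :=
  ∑ f : Fin (k + 1) → α, if IsChainFrom f x z then chainZeta ζ f else 0

lemma chainF_not_le [PartialOrder α] [Fintype α] (ζ : α → α → ℚ) (k : ℕ) {x z : α}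
    (h : ¬ x ≤ z) : chainF ζ k x z = 0 := by
  refine Finset.sum_eq_zero fun f _ => if_neg fun hc => ?_
  exact h (hc.2.1 ▸ hc.2.2 ▸ hc.1.monotone (Fin.zero_le _))

lemma chainF_zero [PartialOrder α] [Fintype α] (ζ : α → α → ℚ) (x z : α) :
    chainF ζ 0 x z = if x = z then 1 else 0 := by
  unfold chainF
  by_cases h : x = z
  · subst h
    rw [if_pos rfl, Fintype.sum_eq_single (fun _ => x)]
    · rw [if_pos ?hc, chainZeta_eq, Fin.prod_univ_zero]
      case hc =>
        refine ⟨fun a b hab => ?_, rfl, rfl⟩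
        exact absurd (Fin.lt_iff_val_lt_val.mp hab)
          (by have := a.isLt; have := b.isLt; omega)
    · intro f hf
      refine if_neg fun hc => hf ?_
      funext i
      have hi : i = 0 := Fin.ext (by have := i.isLt; omega)
      rw [hi, hc.2.1]
  · rw [if_neg h]
    refine Finset.sum_eq_zero fun f _ => if_neg fun hc => ?_
    exact h (hc.2.1.symm.trans hc.2.2)

lemma chainF_self [PartialOrder α] [Fintype α] (ζ : α → α → ℚ) {k : ℕ} (hk : k ≠ 0) (x : α) :
    chainF ζ k x x = 0 := by
  refine Finset.sum_eq_zero fun f _ => if_neg ?_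
  rintro ⟨hm, h0, hl⟩
  have h01 : (0 : Fin (k + 1)) < Fin.last k := by
    rw [Fin.lt_iff_val_lt_val]
    simpa using Nat.pos_of_ne_zero hk
  have hxx := hm h01
  rw [h0, hl] at hxx
  exact lt_irrefl x hxx

lemma chainF_big [PartialOrder α] [Fintype α] (ζ : α → α → ℚ) {k : ℕ} {x z : α}
    (hk : Fintype.card α ≤ k) : chainF ζ k x z = 0 := by
  refine Finset.sum_eq_zero fun f _ => if_neg ?_
  rintro ⟨hm, -, -⟩
  have hle := Fintype.card_le_of_injective f hm.injective
  simp only [Fintype.card_fin] at hle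
  omega

lemma snoc_strictMono_iff [PartialOrder α] {k : ℕ} (g : Fin (k + 1) → α) (z : α) :
    StrictMono (Fin.snoc g z : Fin (k + 2) → α) ↔ StrictMono g ∧ g (Fin.last k) < z := by
  rw [Fin.strictMono_iff_lt_succ, Fin.strictMono_iff_lt_succ]
  constructor
  · intro h
    refine ⟨fun j => ?_, ?_⟩
    · have hj := h j.castSucc
      rwa [Fin.succ_castSucc, Fin.snoc_castSucc, Fin.snoc_castSucc] at hj
    · have hl := h (Fin.last k)
      rwa [Fin.succ_last, Fin.snoc_last, Fin.snoc_castSucc] at hl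
  · rintro ⟨h1, h2⟩ i
    refine Fin.lastCases ?_ ?_ i
    · rwa [Fin.succ_last, Fin.snoc_last, Fin.snoc_castSucc]
    · intro j
      rw [Fin.succ_castSucc, Fin.snoc_castSucc, Fin.snoc_castSucc]
      exact h1 j

lemma chainZeta_snoc (ζ : α → α → ℚ) {k : ℕ} (g : Fin (k + 1) → α) (z : α) :
    chainZeta ζ (Fin.snoc g z : Fin (k + 2) → α)
      = chainZeta ζ g * ζ (g (Fin.last k)) z := by
  rw [chainZeta_eq, chainZeta_eq, Fin.prod_univ_castSucc]
  congr 1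
  · refine Finset.prod_congr rfl fun j _ => ?_
    rw [Fin.succ_castSucc, Fin.snoc_castSucc, Fin.snoc_castSucc]
  · rw [Fin.succ_last, Fin.snoc_last, Fin.snoc_castSucc]

lemma isChainFrom_snoc_iff [PartialOrder α] {k : ℕ} (g : Fin (k + 1) → α) (x z : α) :
    IsChainFrom (Fin.snoc g z : Fin (k + 2) → α) x z
      ↔ (StrictMono g ∧ g 0 = x) ∧ g (Fin.last k) < z := by
  unfold IsChainFrom
  have h0 : (Fin.snoc g z : Fin (k + 2) → α) 0 = g 0 := by
    rw [← Fin.castSucc_zero, Fin.snoc_castSucc]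
  have hl : (Fin.snoc g z : Fin (k + 2) → α) (Fin.last (k + 1)) = z := Fin.snoc_last _ _
  rw [snoc_strictMono_iff, h0, hl]
  tauto

lemma chainF_succ [PartialOrder α] [Fintype α] (ζ : α → α → ℚ) (k : ℕ) (x z : α) :
    chainF ζ (k + 1) x z
      = ∑ y : α, chainF ζ k x y * (if y < z then ζ y z else 0) := by
  classical
  have hbij : Function.Bijective
      (fun p : (Fin (k + 1) → α) × α => (Fin.snoc p.1 p.2 : Fin (k + 2) → α)) := by
    refine Function.bijective_iff_has_inverse.mpr
      ⟨fun f => (Fin.init f, f (Fin.last (k + 1))), fun p => ?_, fun f => ?_⟩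
    · simp [Fin.init_snoc, Fin.snoc_last]
    · exact Fin.snoc_init_self f
  have key : chainF ζ (k + 1) x z
      = ∑ p : (Fin (k + 1) → α) × α,
          (if IsChainFrom (Fin.snoc p.1 p.2 : Fin (k + 2) → α) x z
            then chainZeta ζ (Fin.snoc p.1 p.2 : Fin (k + 2) → α) else 0) :=
    (Fintype.sum_bijective _ hbij _ _ (fun p => rfl)).symm
  rw [key, Fintype.sum_prod_type]
  -- rewrite the right-hand side as a double sum and swap
  have hrhs : ∀ y : α, chainF ζ k x y * (if y < z then ζ y z else 0)
      = ∑ g : Fin (k + 1) → α,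
          (if IsChainFrom g x y then chainZeta ζ g else 0) * (if y < z then ζ y z else 0) := by
    intro y
    rw [chainF, Finset.sum_mul]
  calc
    ∑ g : Fin (k + 1) → α, ∑ y : α,
        (if IsChainFrom (Fin.snoc g y : Fin (k + 2) → α) x z
          then chainZeta ζ (Fin.snoc g y : Fin (k + 2) → α) else 0)
      = ∑ g : Fin (k + 1) → α, ∑ y : α,
          (if IsChainFrom g x y then chainZeta ζ g else 0) * (if y < z then ζ y z else 0) := by
        refine Finset.sum_congr rfl fun g _ => ?_
        -- collapse the LHS inner sum to y = z, the RHS inner sum to y = g last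
        rw [Fintype.sum_eq_single z (fun y hy => if_neg fun hc => by
          have hyz := hc.2.2
          rw [Fin.snoc_last] at hyz
          exact hy hyz)]
        rw [Fintype.sum_eq_single (g (Fin.last k)) (fun y hy => by
          rw [if_neg fun hc => hy hc.2.2.symm, zero_mul])]
        rw [isChainFrom_snoc_iff]
        by_cases h1 : StrictMono g ∧ g 0 = x
        · by_cases h2 : g (Fin.last k) < z
          · rw [if_pos ⟨h1, h2⟩, if_pos ⟨h1.1, h1.2, rfl⟩, if_pos h2, chainZeta_snoc]
          · rw [if_neg fun hc => h2 hc.2, if_neg h2, mul_zero]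
        · rw [if_neg fun hc => h1 hc.1, if_neg fun hc => h1 ⟨hc.1, hc.2.1⟩, zero_mul]
    _ = ∑ y : α, chainF ζ k x y * (if y < z then ζ y z else 0) := by
        rw [Finset.sum_comm]
        exact Finset.sum_congr rfl fun y _ => (hrhs y).symm

/-- The alternating sum of weighted chain counts (the inverse of `ζ`). -/
noncomputable def chainN [PartialOrder α] [Fintype α] (ζ : α → α → ℚ) (x z : α) : ℚ :=
  ∑ k ∈ Finset.range (Fintype.card α), (-1 : ℚ) ^ k * chainF ζ k x z

lemma chainN_not_le [PartialOrder α] [Fintype α] (ζ : α → α → ℚ) {x z : α}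
    (h : ¬ x ≤ z) : chainN ζ x z = 0 := by
  refine Finset.sum_eq_zero fun k _ => ?_
  rw [chainF_not_le ζ k h, mul_zero]

lemma ph_abIndex [PartialOrder α] [Fintype α] (φ : QA →ₐ[ℚ] ℚ) (ρ : α → ℕ) (ζ : α → α → ℚ)
    (x z : α) :
    φ (abIndex ρ ζ x z) = ∑ k ∈ Finset.range (Fintype.card α), ∑ f : Fin (k + 1) → α,
      (if IsChainFrom f x z then chainZeta ζ f * φ (chainWt ρ f) else 0) := by
  rw [abIndex, map_sum]
  refine Finset.sum_congr rfl fun k _ => ?_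
  rw [map_sum]
  refine Finset.sum_congr rfl fun f _ => ?_
  rw [apply_ite φ, map_zero, map_smul, smul_eq_mul]

lemma phA_abIndex [PartialOrder α] [Fintype α] (ρ : α → ℕ) (ζ : α → α → ℚ) (x z : α) :
    phA (abIndex ρ ζ x z)
      = ∑ k ∈ Finset.range (Fintype.card α), (-1 : ℚ) ^ (k - 1) * chainF ζ k x z := by
  rw [ph_abIndex]
  refine Finset.sum_congr rfl fun k _ => ?_
  rw [chainF, Finset.mul_sum]
  refine Finset.sum_congr rfl fun f _ => ?_
  rw [phA_chainWt]
  by_cases h : IsChainFrom f x z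
  · rw [if_pos h, if_pos h, mul_comm]
  · rw [if_neg h, if_neg h, mul_zero]

lemma phB_abIndex [PartialOrder α] [Fintype α] (ρ : α → ℕ) (ζ : α → α → ℚ) {x z : α}
    (hxz : x < z) :
    phB (abIndex ρ ζ x z) = (-1 : ℚ) ^ (ρ z - ρ x - 1) * ζ x z := by
  classical
  have hnt : Nontrivial α := ⟨⟨x, z, ne_of_lt hxz⟩⟩
  have hc2 : 1 < Fintype.card α := Fintype.one_lt_card_iff_nontrivial.mpr hnt
  rw [ph_abIndex]
  rw [Finset.sum_eq_single_of_mem 1 (Finset.mem_range.mpr hc2) ?side]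
  case side =>
    intro k _ hk1
    refine Finset.sum_eq_zero fun f _ => ?_
    match k, hk1 with
    | 0, _ =>
      refine if_neg fun hc => ?_
      exact (ne_of_lt hxz) (hc.2.1.symm.trans hc.2.2)
    | (m + 2), _ =>
      rw [phB_chainWt_big ρ (by omega) f]
      by_cases h : IsChainFrom f x z
      · rw [if_pos h, mul_zero]
      · rw [if_neg h]
  · set f₀ : Fin 2 → α := ![x, z] with hf₀
    have hf00 : f₀ 0 = x := rfl
    have hf01 : f₀ 1 = z := rfl
    have hchain : IsChainFrom f₀ x z := by
      refine ⟨Fin.strictMono_iff_lt_succ.mpr fun i => ?_, hf00, hf01⟩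
      have hi : i = 0 := Subsingleton.elim i 0
      subst hi
      simpa [f₀] using hxz
    rw [Fintype.sum_eq_single f₀ (fun f hf => if_neg fun hc => hf ?uniq)]
    case uniq =>
      funext i
      fin_cases i
      · exact hc.2.1.trans hf00.symm
      · exact hc.2.2.trans hf01.symm
    rw [if_pos hchain, phB_chainWt_one, chainZeta_eq, Fin.prod_univ_one, hf00, hf01]
    show ζ x z * (-1 : ℚ) ^ (ρ z - ρ x - 1) = (-1 : ℚ) ^ (ρ z - ρ x - 1) * ζ x z
    ring

lemma chainN_eq [PartialOrder α] [Fintype α] {ρ : α → ℕ} {ζ : α → α → ℚ}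
    (hq : IsQuasiGraded ρ ζ) {x z : α}
    (hmem : abIndex ρ ζ x z ∈ Algebra.adjoin ℚ ({cvar, dvar} : Set QA))
    (hxz : x ≤ z) :
    chainN ζ x z = (-1 : ℚ) ^ (ρ z - ρ x) * ζ x z := by
  classical
  rcases eq_or_lt_of_le hxz with rfl | hlt
  · have hpos : 0 < Fintype.card α := Fintype.card_pos_iff.mpr ⟨x⟩
    rw [chainN, Finset.sum_eq_single_of_mem 0 (Finset.mem_range.mpr hpos)
      (fun k _ hk => by rw [chainF_self ζ hk x, mul_zero])]
    rw [chainF_zero, if_pos rfl, Nat.sub_self, pow_zero, hq.2.1 x]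
  · have hxne : x ≠ z := ne_of_lt hlt
    have hA := phA_abIndex ρ ζ x z
    have hB := phB_abIndex ρ ζ hlt
    have hkey : ∑ k ∈ Finset.range (Fintype.card α), (-1 : ℚ) ^ (k - 1) * chainF ζ k x z
        = (-1 : ℚ) ^ (ρ z - ρ x - 1) * ζ x z := by
      rw [← hA, ← hB]
      exact phi_agree hmem
    have hflip : chainN ζ x z
        = -∑ k ∈ Finset.range (Fintype.card α), (-1 : ℚ) ^ (k - 1) * chainF ζ k x z := by
      rw [chainN, ← Finset.sum_neg_distrib]
      refine Finset.sum_congr rfl fun k _ => ?_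
      match k with
      | 0 =>
        rw [chainF_zero, if_neg hxne]
        simp
      | (m + 1) =>
        rw [Nat.add_sub_cancel, pow_succ]
        ring
    have hn : ρ x < ρ z := hq.1 hlt
    set m := ρ z - ρ x - 1 with hm
    have hmm : ρ z - ρ x = m + 1 := by omega
    rw [hflip, hkey, hmm, pow_succ]
    ring

lemma zeta_split [PartialOrder α] {ρ : α → ℕ} {ζ : α → α → ℚ} (hq : IsQuasiGraded ρ ζ)
    (y z : α) :
    ζ y z = (if y = z then 1 else 0) + (if y < z then ζ y z else 0) := by
  by_cases h : y = z
  · subst h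
    rw [if_pos rfl, if_neg (lt_irrefl y), hq.2.1 y, add_zero]
  · rw [if_neg h]
    by_cases h2 : y < z
    · rw [if_pos h2, zero_add]
    · rw [if_neg h2, zero_add]
      exact hq.2.2 y z (fun hle => h2 (lt_of_le_of_ne hle h))

lemma chainN_conv [PartialOrder α] [Fintype α] {ρ : α → ℕ} {ζ : α → α → ℚ}
    (hq : IsQuasiGraded ρ ζ) (x z : α) :
    ∑ y ∈ Finset.univ.filter (fun y => x ≤ y ∧ y ≤ z), chainN ζ x y * ζ y z
      = iaDelta x z := by
  classical
  rw [Finset.sum_subset (Finset.filter_subset _ _) ?van]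
  case van =>
    intro y _ hy
    simp only [Finset.mem_filter, Finset.mem_univ, true_and, not_and] at hy
    by_cases h1 : x ≤ y
    · rw [hq.2.2 y z (hy h1), mul_zero]
    · rw [chainN_not_le ζ h1, zero_mul]
  have hstep : ∀ k : ℕ, (∑ y : α, chainF ζ k x y * ζ y z)
      = chainF ζ k x z + chainF ζ (k + 1) x z := by
    intro k
    have : ∀ y : α, chainF ζ k x y * ζ y z
        = (if y = z then chainF ζ k x y else 0)
          + chainF ζ k x y * (if y < z then ζ y z else 0) := by
      intro y
      by_cases h : y = z
      · subst h
        simp [hq.2.1 y, lt_irrefl]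
      · by_cases h2 : y < z
        · simp [h, h2]
        · have h0 : ζ y z = 0 := hq.2.2 y z (fun hle => h2 (lt_of_le_of_ne hle h))
          simp [h, h2, h0]
    rw [Fintype.sum_congr _ _ this, Finset.sum_add_distrib, Finset.sum_ite_eq' Finset.univ z,
      if_pos (Finset.mem_univ z), ← chainF_succ]
  calc
    ∑ y : α, chainN ζ x y * ζ y z
      = ∑ y : α, ∑ k ∈ Finset.range (Fintype.card α),
          ((-1 : ℚ) ^ k * chainF ζ k x y) * ζ y z := by
        refine Finset.sum_congr rfl fun y _ => ?_
        rw [chainN, Finset.sum_mul]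
    _ = ∑ k ∈ Finset.range (Fintype.card α),
          (-1 : ℚ) ^ k * ∑ y : α, chainF ζ k x y * ζ y z := by
        rw [Finset.sum_comm]
        refine Finset.sum_congr rfl fun k _ => ?_
        rw [Finset.mul_sum]
        exact Finset.sum_congr rfl fun y _ => by ring
    _ = ∑ k ∈ Finset.range (Fintype.card α),
          ((-1 : ℚ) ^ k * chainF ζ k x z + (-1 : ℚ) ^ k * chainF ζ (k + 1) x z) := by
        refine Finset.sum_congr rfl fun k _ => ?_
        rw [hstep k, mul_add]
    _ = iaDelta x z := by
        have e1 : (∑ k ∈ Finset.range (Fintype.card α), (-1 : ℚ) ^ k * chainF ζ k x z)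
            = chainN ζ x z := rfl
        have hcard : chainF ζ (Fintype.card α) x z = 0 := chainF_big ζ (le_refl _)
        have hsum : ∑ k ∈ Finset.range (Fintype.card α),
            (-1 : ℚ) ^ (k + 1) * chainF ζ (k + 1) x z
            = chainN ζ x z - (-1 : ℚ) ^ 0 * chainF ζ 0 x z := by
          have hR : (∑ k ∈ Finset.range (Fintype.card α + 1), (-1 : ℚ) ^ k * chainF ζ k x z)
              = (∑ k ∈ Finset.range (Fintype.card α),
                  (-1 : ℚ) ^ (k + 1) * chainF ζ (k + 1) x z)
                + (-1 : ℚ) ^ 0 * chainF ζ 0 x z :=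
            Finset.sum_range_succ' _ _
          have hL : (∑ k ∈ Finset.range (Fintype.card α + 1), (-1 : ℚ) ^ k * chainF ζ k x z)
              = chainN ζ x z
                + (-1 : ℚ) ^ (Fintype.card α) * chainF ζ (Fintype.card α) x z :=
            Finset.sum_range_succ _ _
          rw [hcard, mul_zero, add_zero] at hL
          linarith [hR, hL]
        have hterm : ∀ k : ℕ, (-1 : ℚ) ^ k * chainF ζ (k + 1) x z
            = -((-1 : ℚ) ^ (k + 1) * chainF ζ (k + 1) x z) := by
          intro k
          rw [pow_succ]
          ring
        have h2 : ∑ k ∈ Finset.range (Fintype.card α), (-1 : ℚ) ^ k * chainF ζ (k + 1) x z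
            = chainF ζ 0 x z - chainN ζ x z := by
          rw [Finset.sum_congr rfl fun k _ => hterm k, Finset.sum_neg_distrib, hsum,
            pow_zero, one_mul]
          ring
        rw [Finset.sum_add_distrib, e1, h2, chainF_zero]
        unfold iaDelta
        ring

end CDProof


/-- if the ab-index of every interval is a polynomial in `c` and `d`,
then the quasi-graded poset is Eulerian. -/
theorem eulerian_of_cd_index {α : Type*} [Fintype α] [PartialOrder α]
    (ρ : α → ℕ) (ζ : α → α → ℚ) (hq : IsQuasiGraded ρ ζ)
    (hcd : ∀ x z : α, x ≤ z →
      abIndex ρ ζ x z ∈ Algebra.adjoin ℚ ({cvar, dvar} : Set QA)) :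
    IsEulerian ρ ζ := by
  intro x z _
  unfold EulerianAt
  have h : ∀ y ∈ Finset.univ.filter (fun y => x ≤ y ∧ y ≤ z),
      (-1 : ℚ) ^ (ρ y - ρ x) * ζ x y * ζ y z = chainN ζ x y * ζ y z := by
    intro y hy
    simp only [Finset.mem_filter, Finset.mem_univ, true_and] at hy
    rw [← chainN_eq hq (hcd x y hy.1) hy.1]
  rw [Finset.sum_congr rfl h]
  exact chainN_conv hq x z
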